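/- Let λ ∈ ℂ∖ℝ. There exists A ∈ GL₂(ℂ) whose action on ℙ¹(ℂ) satisfies A·[1:0] = [1:0], A·[0:1] = [1:1], A·[1:1] = [λ:1] and A·[λ:1] = [0:1], if and only if λ² − λ + 1 = 0, i.e. if and only if λ = e^{iπ/3} or λ = e^{−iπ/3}. -/

import Mathlib

noncomputable section

open ComplexConjugate

/-- The projective line `ℙ¹(K)` over a field `K`, i.e. the projectivization of `K²`. -/
abbrev Pone (K : Type) [Field K] : Type := Projectivization K (Fin 2 → K)

theorem vec_ne_zero {K : Type} [Field K] {a b : K} (h : a ≠ 0 ∨ b ≠ 0) :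
    (![a, b] : Fin 2 → K) ≠ 0 := by
  intro hv
  rcases h with h | h
  · exact h (by simpa using congrFun hv 0)
  · exact h (by simpa using congrFun hv 1)

/-- The point `[a : b]` of the projective line `ℙ¹(K)`. -/
def pt {K : Type} [Field K] (a b : K) (h : a ≠ 0 ∨ b ≠ 0) : Pone K :=
  Projectivization.mk K ![a, b] (vec_ne_zero h)

theorem mulVecLin_injective {K : Type} [Field K] (A : GL (Fin 2) K) :
    Function.Injective ⇑(Matrix.mulVecLin (A : Matrix (Fin 2) (Fin 2) K)) := by
  intro v w hvw
  have h1 : (A : Matrix (Fin 2) (Fin 2) K).mulVec v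
      = (A : Matrix (Fin 2) (Fin 2) K).mulVec w := hvw
  have h2 : ((↑(A⁻¹) : Matrix (Fin 2) (Fin 2) K) * (A : Matrix (Fin 2) (Fin 2) K)).mulVec v
      = ((↑(A⁻¹) : Matrix (Fin 2) (Fin 2) K) * (A : Matrix (Fin 2) (Fin 2) K)).mulVec w := by
    rw [← Matrix.mulVec_mulVec, ← Matrix.mulVec_mulVec, h1]
  rw [Units.inv_mul, Matrix.one_mulVec, Matrix.one_mulVec] at h2
  exact h2

/-- The action of `A ∈ GL₂(K)` on the projective line `ℙ¹(K)`: `A·[v] = [A v]`. -/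
def glMap {K : Type} [Field K] (A : GL (Fin 2) K) : Pone K → Pone K :=
  Projectivization.map (Matrix.mulVecLin (A : Matrix (Fin 2) (Fin 2) K)) (mulVecLin_injective A)

/-- The point `[1 : 0]` of `ℙ¹(ℂ)`. -/
def P10 : Pone ℂ := pt 1 0 (Or.inl one_ne_zero)

/-- The point `[0 : 1]` of `ℙ¹(ℂ)`. -/
def P01 : Pone ℂ := pt 0 1 (Or.inr one_ne_zero)

/-- The point `[1 : 1]` of `ℙ¹(ℂ)`. -/
def P11 : Pone ℂ := pt 1 1 (Or.inl one_ne_zero)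

/-- The point `[a : 1]` of `ℙ¹(ℂ)`. -/
def Pa (a : ℂ) : Pone ℂ := pt a 1 (Or.inr one_ne_zero)


lemma mulVecLin_two (M : Matrix (Fin 2) (Fin 2) ℂ) (a b : ℂ) :
    (Matrix.mulVecLin M) ![a, b] = ![M 0 0 * a + M 0 1 * b, M 1 0 * a + M 1 1 * b] := by
  funext i
  fin_cases i <;>
    simp [Matrix.mulVecLin_apply, Matrix.mulVec, dotProduct, Fin.sum_univ_two]

lemma glMap_pt_iff (A : GL (Fin 2) ℂ) {a b c d : ℂ} (h : a ≠ 0 ∨ b ≠ 0)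
    (h' : c ≠ 0 ∨ d ≠ 0) :
    glMap A (pt a b h) = pt c d h' ↔ ∃ t : ℂˣ,
      (t : ℂ) * c = (A : Matrix (Fin 2) (Fin 2) ℂ) 0 0 * a
          + (A : Matrix (Fin 2) (Fin 2) ℂ) 0 1 * b ∧
      (t : ℂ) * d = (A : Matrix (Fin 2) (Fin 2) ℂ) 1 0 * a
          + (A : Matrix (Fin 2) (Fin 2) ℂ) 1 1 * b := by
  unfold glMap pt
  rw [Projectivization.map_mk, Projectivization.mk_eq_mk_iff, mulVecLin_two]
  constructor
  · rintro ⟨t, ht⟩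
    exact ⟨t, by simpa [Units.smul_def] using congrFun ht 0, by simpa [Units.smul_def] using congrFun ht 1⟩
  · rintro ⟨t, ht0, ht1⟩
    refine ⟨t, funext fun i => ?_⟩
    fin_cases i <;> simpa

/-- Let `λ ∈ ℂ ∖ ℝ`. There exists `A ∈ GL₂(ℂ)` whose action on `ℙ¹(ℂ)`
satisfies `A·[1:0] = [1:0]`, `A·[0:1] = [1:1]`, `A·[1:1] = [λ:1]` and `A·[λ:1] = [0:1]`, if
and only if `λ² − λ + 1 = 0`, i.e. if and only if `λ = e^{iπ/3}` or `λ = e^{−iπ/3}`. -/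
theorem statement7 (lam : ℂ) (hl : lam.im ≠ 0) :
    ((∃ A : GL (Fin 2) ℂ,
        glMap A P10 = P10 ∧ glMap A P01 = P11 ∧
        glMap A P11 = Pa lam ∧ glMap A (Pa lam) = P01)
      ↔ lam ^ 2 - lam + 1 = 0) ∧
    (lam ^ 2 - lam + 1 = 0 ↔
      (lam = Complex.exp (Complex.I * (Real.pi : ℂ) / 3) ∨
        lam = Complex.exp (-(Complex.I * (Real.pi : ℂ) / 3)))) := by
  constructor
  · constructor
    · rintro ⟨A, h1, h2, h3, h4⟩
      simp only [P10, P01, P11, Pa] at h1 h2 h3 h4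
      rw [glMap_pt_iff] at h1 h2 h3 h4
      obtain ⟨c1, e11, e12⟩ := h1
      obtain ⟨c2, e21, e22⟩ := h2
      obtain ⟨c3, e31, e32⟩ := h3
      obtain ⟨c4, e41, e42⟩ := h4
      have key : (c2 : ℂ) * (lam ^ 2 - lam + 1) = 0 := by
        linear_combination (-1 : ℂ) * e41 + lam * e31 - lam ^ 2 * e32
          + lam ^ 2 * e12 + lam ^ 2 * e22 + (1 - lam) * e21
      rcases mul_eq_zero.1 key with hc | h
      · exact absurd hc c2.ne_zero
      · exact h
    · intro hq
      have hlam1 : lam - 1 ≠ 0 := by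
        intro h
        rw [sub_eq_zero] at h
        exact hl (by rw [h]; simp)
      have hdet : (!![lam - 1, 1; 0, 1] : Matrix (Fin 2) (Fin 2) ℂ).det ≠ 0 := by
        rw [Matrix.det_fin_two_of]
        simpa using hlam1
      set A := Matrix.GeneralLinearGroup.mkOfDetNeZero _ hdet with hAdef
      have hA : (A : Matrix (Fin 2) (Fin 2) ℂ) = !![lam - 1, 1; 0, 1] := rfl
      refine ⟨A, ?_, ?_, ?_, ?_⟩ <;>
        simp only [P10, P01, P11, Pa] <;> rw [glMap_pt_iff]
      · exact ⟨Units.mk0 (lam - 1) hlam1, by simp [hA], by simp [hA]⟩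
      · exact ⟨1, by simp [hA], by simp [hA]⟩
      · exact ⟨1, by simp [hA], by simp [hA]⟩
      · exact ⟨1, by simp [hA]; linear_combination -hq, by simp [hA]⟩
  · have hs : ((Real.sqrt 3 : ℝ) : ℂ) ^ 2 = 3 := by
      rw [← Complex.ofReal_pow, Real.sq_sqrt (by norm_num : (0:ℝ) ≤ 3)]
      norm_num
    have hI : Complex.I ^ 2 = -1 := Complex.I_sq
    have hexp1 : Complex.exp (Complex.I * (Real.pi : ℂ) / 3)
        = 1 / 2 + ((Real.sqrt 3 : ℝ) / 2 : ℂ) * Complex.I := by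
      have harg : Complex.I * (Real.pi : ℂ) / 3 = ((Real.pi / 3 : ℝ) : ℂ) * Complex.I := by
        push_cast; ring
      rw [harg, Complex.exp_mul_I, ← Complex.ofReal_cos, ← Complex.ofReal_sin,
        Real.cos_pi_div_three, Real.sin_pi_div_three]
      push_cast; ring
    have hexp2 : Complex.exp (-(Complex.I * (Real.pi : ℂ) / 3))
        = 1 / 2 - ((Real.sqrt 3 : ℝ) / 2 : ℂ) * Complex.I := by
      have harg : -(Complex.I * (Real.pi : ℂ) / 3) = ((-(Real.pi / 3) : ℝ) : ℂ) * Complex.I := by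
        push_cast; ring
      rw [harg, Complex.exp_mul_I, ← Complex.ofReal_cos, ← Complex.ofReal_sin,
        Real.cos_neg, Real.sin_neg, Real.cos_pi_div_three, Real.sin_pi_div_three]
      push_cast; ring
    constructor
    · intro h
      have hfac : (lam - (1 / 2 + ((Real.sqrt 3 : ℝ) / 2 : ℂ) * Complex.I))
          * (lam - (1 / 2 - ((Real.sqrt 3 : ℝ) / 2 : ℂ) * Complex.I)) = 0 := by
        linear_combination h - (Complex.I ^ 2 / 4) * hs - (3 / 4 : ℂ) * hI
      rcases mul_eq_zero.1 hfac with h' | h'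
      · left; rw [hexp1, ← sub_eq_zero]; exact h'
      · right; rw [hexp2, ← sub_eq_zero]; exact h'
    · rintro (h | h) <;> rw [h]
      · rw [hexp1]
        linear_combination (Complex.I ^ 2 / 4) * hs + (3 / 4 : ℂ) * hI
      · rw [hexp2]
        linear_combination (Complex.I ^ 2 / 4) * hs + (3 / 4 : ℂ) * hI
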